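/- Spanning-path routing is delivery-guaranteed: in a rooted spanning tree with preorder interval labeling, the routing rule 'if the destination label lies in the interval of a child subtree, forward to that child; otherwise forward to the parent' always delivers a packet from any source vertex to any destination vertex in finitely many steps, and the route taken is exactly the unique tree path between source and destination. -/

import Mathlib

/-- `u` is an ancestor of `w` (or equal to it) in the rooted tree given by the
`parent` function. -/
def IsAncestor {V : Type*} (parent : V → V) (u w : V) : Prop :=
  ∃ n : ℕ, parent^[n] w = u

/-- The subtree rooted at `u`: all vertices of which `u` is an ancestor. -/
def subtreeOf {V : Type*} (parent : V → V) (u : V) : Set V :=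
  {w | IsAncestor parent u w}

/-- The maximum preorder label occurring in the subtree rooted at `u`. -/
noncomputable def maxRange {V : Type*} (parent : V → V) (spvc : V → ℕ) (u : V) : ℕ :=
  sSup (spvc '' subtreeOf parent u)

/-- Spanning-path routing is delivery-guaranteed: in a rooted spanning tree with
preorder interval labeling, the rule "forward to the child whose interval contains
the destination label if one exists, otherwise forward to the parent" delivers a
packet from any source `s` to any destination `t` in finitely many steps, and the
visited vertices are pairwise distinct, i.e. the route is the unique simple tree
path from `s` to `t`. -/
theorem stmt_8 {V : Type*} [Fintype V] [DecidableEq V]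
    (root : V) (parent : V → V) (spvc : V → ℕ)
    (hroot : parent root = root)
    (hreach : ∀ v, IsAncestor parent root v)
    (hinj : Function.Injective spvc)
    (hmono : ∀ v, v ≠ root → spvc (parent v) < spvc v)
    (hint : ∀ v, spvc '' subtreeOf parent v =
      Set.Icc (spvc v) (maxRange parent spvc v))
    (next : V → ℕ → V)
    (hnext : ∀ u d, (∃ c : V, parent c = u ∧ c ≠ u ∧
        d ∈ Set.Icc (spvc c) (maxRange parent spvc c) ∧ next u d = c) ∨
      ((¬ ∃ c : V, parent c = u ∧ c ≠ u ∧
        d ∈ Set.Icc (spvc c) (maxRange parent spvc c)) ∧ next u d = parent u))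
    (s t : V) :
    ∃ k : ℕ, (fun u => next u (spvc t))^[k] s = t ∧
      (((List.range (k + 1)).map
        (fun i => (fun u => next u (spvc t))^[i] s)).Nodup) := by
  set f : V → V := fun u => next u (spvc t) with hf
  -- basic: spvc non-increasing along parent iterates
  have hstep_le : ∀ v : V, spvc (parent v) ≤ spvc v := by
    intro v
    by_cases hv : v = root
    · rw [hv, hroot]
    · exact (hmono v hv).le
  have hiter_le : ∀ (n : ℕ) (v : V), spvc (parent^[n] v) ≤ spvc v := by
    intro n
    induction n with
    | zero => intro v; simp
    | succ n ih =>
      intro v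
      rw [Function.iterate_succ_apply]
      exact (ih (parent v)).trans (hstep_le v)
  have hanc_le : ∀ u w : V, IsAncestor parent u w → spvc u ≤ spvc w := by
    rintro u w ⟨n, rfl⟩; exact hiter_le n w
  -- membership in interval iff in subtree, for t
  have hicc_sub : ∀ c : V, spvc t ∈ Set.Icc (spvc c) (maxRange parent spvc c) →
      t ∈ subtreeOf parent c := by
    intro c hc
    rw [← hint] at hc
    obtain ⟨w, hw, hws⟩ := hc
    rwa [hinj hws] at hw
  have hsub_icc : ∀ c : V, t ∈ subtreeOf parent c →
      spvc t ∈ Set.Icc (spvc c) (maxRange parent spvc c) := by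
    intro c hc
    rw [← hint]
    exact ⟨t, hc, rfl⟩
  -- existence of a proper child containing t
  have hchild : ∀ (n : ℕ) (u : V), parent^[n] t = u → t ≠ u →
      ∃ c, parent c = u ∧ c ≠ u ∧ t ∈ subtreeOf parent c := by
    intro n
    induction n with
    | zero => intro u h ht; exact absurd h ht
    | succ n ih =>
      intro u h ht
      rw [Function.iterate_succ_apply'] at h
      by_cases hc : parent^[n] t = u
      · exact ih u hc ht
      · exact ⟨parent^[n] t, h, hc, ⟨n, rfl⟩⟩
  -- spvc increases from parent to (proper) child
  have hchild_lt : ∀ c u : V, parent c = u → c ≠ u → spvc u < spvc c := by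
    intro c u hpc hcu
    have hcr : c ≠ root := by
      rintro rfl
      rw [hroot] at hpc
      exact hcu hpc
    rw [← hpc]
    exact hmono c hcr
  -- descending step
  have hdesc_step : ∀ u : V, t ∈ subtreeOf parent u → u ≠ t →
      parent (f u) = u ∧ f u ≠ u ∧ t ∈ subtreeOf parent (f u) := by
    intro u hsub hut
    obtain ⟨n, hn⟩ := hsub
    obtain ⟨c, hpc, hcu, hcs⟩ := hchild n u hn (Ne.symm hut)
    rcases hnext u (spvc t) with ⟨c', hpc', hcu', hI', hnc'⟩ | ⟨hno, _⟩
    · have : f u = c' := hnc'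
      rw [this]
      exact ⟨hpc', hcu', hicc_sub c' hI'⟩
    · exact absurd ⟨c, hpc, hcu, hsub_icc c hcs⟩ hno
  -- descending phase
  have hdesc : ∀ (N : ℕ) (u : V), spvc t - spvc u ≤ N → t ∈ subtreeOf parent u →
      ∃ k, f^[k] u = t := by
    intro N
    induction N with
    | zero =>
      intro u hle hsub
      have h1 : spvc u ≤ spvc t := hanc_le u t hsub
      have h2 : spvc t ≤ spvc u := by omega
      exact ⟨0, (hinj (le_antisymm h1 h2)).symm ▸ rfl⟩
    | succ N ih =>
      intro u hle hsub
      by_cases hut : u = t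
      · exact ⟨0, hut⟩
      · obtain ⟨hpc, hcu, hcs⟩ := hdesc_step u hsub hut
        have h1 : spvc u < spvc (f u) := hchild_lt (f u) u hpc hcu
        have h2 : spvc (f u) ≤ spvc t := hanc_le (f u) t hcs
        obtain ⟨k, hk⟩ := ih (f u) (by omega) hcs
        exact ⟨k + 1, by rw [Function.iterate_succ_apply]; exact hk⟩
  -- ascending phase
  have hasc : ∀ (m : ℕ) (u : V), t ∈ subtreeOf parent (parent^[m] u) →
      ∃ k, f^[k] u = t := by
    intro m
    induction m with
    | zero => intro u h; exact hdesc (spvc t - spvc u) u le_rfl h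
    | succ m ih =>
      intro u h
      by_cases hsub : t ∈ subtreeOf parent u
      · exact hdesc (spvc t - spvc u) u le_rfl hsub
      · have hfu : f u = parent u := by
          rcases hnext u (spvc t) with ⟨c, hpc, hcu, hI, hnc⟩ | ⟨_, hnc⟩
          · exfalso
            have htc : t ∈ subtreeOf parent c := hicc_sub c hI
            obtain ⟨n, hn⟩ := htc
            exact hsub ⟨n + 1, by rw [Function.iterate_succ_apply', hn, hpc]⟩
          · exact hnc
        rw [Function.iterate_succ_apply] at h
        obtain ⟨k, hk⟩ := ih (parent u) h
        refine ⟨k + 1, ?_⟩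
        rw [Function.iterate_succ_apply, hfu]
        exact hk
  -- existence
  obtain ⟨m, hm⟩ := hreach s
  have hex : ∃ k, f^[k] s = t := hasc m s (by rw [hm]; exact hreach t)
  -- take minimal k
  set k := Nat.find hex with hkdef
  have hkspec : f^[k] s = t := Nat.find_spec hex
  have hmin : ∀ j < k, f^[j] s ≠ t := fun j hj => Nat.find_min hex hj
  refine ⟨k, hkspec, ?_⟩
  have key : ∀ i j, i < j → j ≤ k → f^[i] s ≠ f^[j] s := by
    intro i j hij hjk heq
    have : f^[k - j + i] s = t := by
      have h1 : f^[k - j + j] s = t := by rwa [Nat.sub_add_cancel hjk]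
      rw [Function.iterate_add_apply] at h1 ⊢
      rw [← heq] at h1
      exact h1
    exact hmin (k - j + i) (by omega) this
  apply List.Nodup.map_on _ List.nodup_range
  intro i hi j hj heq
  rw [List.mem_range] at hi hj
  rcases lt_trichotomy i j with h | h | h
  · exact absurd heq (key i j h (by omega))
  · exact h
  · exact absurd heq.symm (key j i h (by omega))
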